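/- For every real C > −3 there is a constant K = K(C) > 0 such that for all λ > 0 and all z = x + iy with −3 < x ≤ C and |y| ≥ 1, one has |M^λ(z)| ≤ K · λ^x · (|y| + 1)^{−x − 7/2}, where M^λ(z) = (2λ^z/π) · Γ(−z−3) · sin(πz/2) · (12 − 6·2^{−z}). -/

import Mathlib

open Complex Real MeasureTheory intervalIntegral

/-- Gamma shift: `Γ(w+n) = (∏_{k<n} (w+k)) Γ(w)` when `Im w ≠ 0`. -/
lemma Gamma_shift (w : ℂ) (hw : w.im ≠ 0) (n : ℕ) :
    Complex.Gamma (w + n) = (∏ k ∈ Finset.range n, (w + k)) * Complex.Gamma w := by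
  induction n with
  | zero => simp
  | succ n ih =>
    have hne : w + n ≠ 0 := by
      intro h
      have : (w + (n:ℂ)).im = 0 := by rw [h]; simp
      simp at this; exact hw this
    have : Complex.Gamma (w + (n+1 : ℕ)) = (w + n) * Complex.Gamma (w + n) := by
      have := Complex.Gamma_add_one (w + n) hne
      rw [← this]; congr 1; push_cast; ring
    rw [this, ih, Finset.prod_range_succ]; ring

lemma sin_half_eq (z : ℂ) :
    Complex.sin ((Real.pi : ℂ) * z / 2) = Complex.cos ((Real.pi : ℂ) * (-z - 3) / 2) := by
  have h : ((Real.pi : ℂ) * (-z - 3) / 2) =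
      -((Real.pi : ℂ) * z / 2 + ((Real.pi : ℂ) + (Real.pi : ℂ) / 2)) := by ring
  rw [h, Complex.cos_neg, Complex.cos_add, Complex.cos_add, Complex.sin_add]
  simp [Complex.cos_pi, Complex.sin_pi, Complex.cos_pi_div_two, Complex.sin_pi_div_two]

lemma key_identity (z : ℂ) (hz : z.im ≠ 0) :
    Complex.Gamma (-z - 3) * Complex.sin ((Real.pi : ℂ) * z / 2) =
      (Real.sqrt Real.pi : ℂ) * (2 : ℂ) ^ (-z - 4) *
        Complex.Gamma ((-z - 3) / 2) / Complex.Gamma ((z + 4) / 2) := by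
  set s : ℂ := -z - 3 with hs
  have him : s.im = -z.im := by simp [hs]
  have hsqrt : (Real.sqrt Real.pi : ℂ) ≠ 0 := by
    simp only [ne_eq, Complex.ofReal_eq_zero]
    positivity
  have hsq : (Real.sqrt Real.pi : ℂ) * (Real.sqrt Real.pi : ℂ) = (Real.pi : ℂ) := by
    rw [← Complex.ofReal_mul, Real.mul_self_sqrt Real.pi_pos.le]
  have himne : ∀ w : ℂ, w.im ≠ 0 → Complex.Gamma w ≠ 0 := by
    intro w hw
    apply Complex.Gamma_ne_zero
    intro m h
    apply hw; rw [h]; simp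
  have hG2 : Complex.Gamma ((1 + s) / 2) ≠ 0 := by
    apply himne; simp [him]; exact hz
  have hG3 : Complex.Gamma ((1 - s) / 2) ≠ 0 := by
    apply himne; simp [him]; exact hz
  have hrefl : Complex.Gamma ((1 + s) / 2) * Complex.Gamma ((1 - s) / 2) *
      Complex.cos ((Real.pi : ℂ) * s / 2) = (Real.pi : ℂ) := by
    have hcosne : Complex.sin ((Real.pi : ℂ) * ((1 + s) / 2)) ≠ 0 := by
      intro h0
      rw [Complex.sin_eq_zero_iff] at h0
      obtain ⟨k, hk⟩ := h0
      have : ((Real.pi : ℂ) * ((1 + s) / 2)).im = ((k : ℂ) * (Real.pi : ℂ)).im := by rw [hk]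
      simp [Complex.mul_im, him] at this
      exact hz this
    have h1 := Complex.Gamma_mul_Gamma_one_sub ((1 + s) / 2)
    have he : (1 : ℂ) - (1 + s) / 2 = (1 - s) / 2 := by ring
    have he2 : Complex.sin ((Real.pi : ℂ) * ((1 + s) / 2)) =
        Complex.cos ((Real.pi : ℂ) * s / 2) := by
      have h3 : (Real.pi : ℂ) * ((1 + s) / 2) = (Real.pi : ℂ) / 2 + (Real.pi : ℂ) * s / 2 := by
        ring
      rw [h3, Complex.sin_add]
      simp [Complex.sin_pi_div_two, Complex.cos_pi_div_two]
    rw [he] at h1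
    rw [← he2, h1, div_mul_cancel₀]
    exact hcosne
  have hdup := Complex.Gamma_mul_Gamma_add_half (s / 2)
  have he4 : s / 2 + 1 / 2 = (1 + s) / 2 := by ring
  have he5 : 2 * (s / 2) = s := by ring
  rw [he4, he5] at hdup
  have hpow : (2 : ℂ) ^ ((1 : ℂ) - s) * (2 : ℂ) ^ (s - 1) = 1 := by
    rw [← Complex.cpow_add _ _ (two_ne_zero)]
    have : (1 : ℂ) - s + (s - 1) = 0 := by ring
    rw [this, Complex.cpow_zero]
  have hGs : Complex.Gamma s * Complex.cos ((Real.pi : ℂ) * s / 2) =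
      (Real.sqrt Real.pi : ℂ) * (2 : ℂ) ^ (s - 1) *
        Complex.Gamma (s / 2) / Complex.Gamma ((1 - s) / 2) := by
    rw [eq_div_iff hG3]
    apply mul_right_cancel₀ (show (2 : ℂ) ^ ((1 : ℂ) - s) * (Real.sqrt Real.pi : ℂ) *
        Complex.Gamma ((1 + s) / 2) ≠ 0 by
      exact mul_ne_zero (mul_ne_zero (left_ne_zero_of_mul_eq_one hpow) hsqrt) hG2)
    linear_combination
      (Complex.Gamma s * (2:ℂ)^((1:ℂ)-s) * (Real.sqrt Real.pi : ℂ)) * hrefl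
      - ((2:ℂ)^((1:ℂ)-s) * (2:ℂ)^(s-1) * (Real.sqrt Real.pi : ℂ) *
          (Real.sqrt Real.pi : ℂ)) * hdup
      - ((2:ℂ)^((1:ℂ)-s) * (2:ℂ)^(s-1) * Complex.Gamma s * (2:ℂ)^((1:ℂ)-s) *
          (Real.sqrt Real.pi : ℂ)) * hsq
      - (Complex.Gamma s * (2:ℂ)^((1:ℂ)-s) * (Real.sqrt Real.pi : ℂ) * (Real.pi : ℂ)) * hpow
  have hse : (1 - s) / 2 = (z + 4) / 2 := by rw [hs]; ring
  have hse2 : s - 1 = -z - 4 := by rw [hs]; ring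
  rw [sin_half_eq]
  have h6 : (Real.pi : ℂ) * (-z - 3) / 2 = (Real.pi : ℂ) * s / 2 := by rw [hs]
  rw [h6, hGs, hse, hse2]

lemma Gamma_le_one_of_mem (x : ℝ) (h1 : 1 ≤ x) (h2 : x ≤ 2) : Real.Gamma x ≤ 1 := by
  have ht : x = (2 - x) • (1:ℝ) + (x - 1) • (2:ℝ) := by simp; ring
  have h := Real.convexOn_Gamma.2 (by norm_num : (1:ℝ) ∈ Set.Ioi 0)
    (by norm_num : (2:ℝ) ∈ Set.Ioi 0) (by linarith : (0:ℝ) ≤ 2 - x)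
    (by linarith : (0:ℝ) ≤ x - 1) (by ring)
  rw [← ht, Real.Gamma_one, Real.Gamma_two] at h
  simp only [smul_eq_mul, mul_one] at h
  linarith

lemma one_le_Gamma_of_two_le (x : ℝ) (h2 : 2 ≤ x) : 1 ≤ Real.Gamma x := by
  rcases eq_or_lt_of_le h2 with h | h
  · rw [← h, Real.Gamma_two]
  have hx1 : (0:ℝ) < x - 1 := by linarith
  have ht : (2:ℝ) = ((x - 2)/(x-1)) • (1:ℝ) + ((1:ℝ)/(x-1)) • x := by
    simp only [smul_eq_mul, mul_one]
    rw [one_div_mul_eq_div, ← add_div, eq_div_iff hx1.ne']; ring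
  have hc := Real.convexOn_Gamma.2 (by norm_num : (1:ℝ) ∈ Set.Ioi 0)
    (show x ∈ Set.Ioi (0:ℝ) by simp; linarith)
    (show (0:ℝ) ≤ (x-2)/(x-1) by apply div_nonneg <;> linarith)
    (show (0:ℝ) ≤ 1/(x-1) by positivity) (by field_simp; ring)
  rw [← ht, Real.Gamma_two, Real.Gamma_one] at hc
  simp only [smul_eq_mul, mul_one] at hc
  -- hc : 1 ≤ (x-2)/(x-1) + 1/(x-1) * Γ x
  have key : 1/(x-1) ≤ 1/(x-1) * Real.Gamma x := by
    have e : (x-2)/(x-1) + 1/(x-1) = 1 := by field_simp; ring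
    linarith
  have hpos : 0 < 1/(x-1) := by positivity
  exact (mul_le_mul_iff_right₀ hpos).mp (by simpa using key)

lemma Gamma_add_one_ge (δ : ℝ) (h0 : 0 < δ) (h1 : δ < 1) : (1:ℝ)/3 ≤ Real.Gamma (δ + 1) := by
  rcases le_or_gt δ (1/2) with hle | hgt
  · have hrefl := Real.Gamma_mul_Gamma_one_sub δ
    have hG1 : Real.Gamma (δ + 1) = δ * Real.Gamma δ := Real.Gamma_add_one h0.ne'
    have hG2 : (1 - δ) * Real.Gamma (1 - δ) = Real.Gamma (2 - δ) := by
      have h := Real.Gamma_add_one (s := 1 - δ) (by linarith)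
      rw [show (1 - δ) + 1 = 2 - δ by ring] at h
      linarith
    have hG2le : Real.Gamma (2 - δ) ≤ 1 := Gamma_le_one_of_mem _ (by linarith) (by linarith)
    have hsin : Real.sin (Real.pi * δ) ≤ Real.pi * δ := Real.sin_le (by positivity)
    have hsinpos : 0 < Real.sin (Real.pi * δ) :=
      Real.sin_pos_of_pos_of_lt_pi (by positivity) (by nlinarith [Real.pi_pos])
    have hGpos : 0 < Real.Gamma (1 - δ) := Real.Gamma_pos_of_pos (by linarith)
    have hGδpos : 0 < Real.Gamma δ := Real.Gamma_pos_of_pos h0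
    have key : Real.Gamma (δ + 1) * (Real.sin (Real.pi * δ) * Real.Gamma (1 - δ)) =
        δ * Real.pi := by
      rw [hG1]
      have h := hrefl
      rw [eq_div_iff hsinpos.ne'] at h
      -- h : Gamma δ * Gamma (1-δ) * sin (π δ) = π
      nlinarith [h]
    have hGub : (1 - δ) * Real.Gamma (1 - δ) ≤ 1 := by linarith
    have hGδ1pos : 0 < Real.Gamma (δ + 1) := Real.Gamma_pos_of_pos (by linarith)
    -- from key : Γ(δ+1) = δπ / (sin Γ), and sin*Γ(1-δ) ≤ πδ/(1-δ)
    have h2 : Real.sin (Real.pi * δ) * Real.Gamma (1 - δ) * (1 - δ) ≤ Real.pi * δ := by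
      nlinarith [hsin, hGpos, hGub]
    -- so δπ(1-δ) = Γ(δ+1) * (sinΓ) * (1-δ) ≤ Γ(δ+1) * πδ
    have h3 : δ * Real.pi * (1 - δ) ≤ Real.Gamma (δ + 1) * (Real.pi * δ) := by
      calc δ * Real.pi * (1 - δ)
          = Real.Gamma (δ + 1) * (Real.sin (Real.pi * δ) * Real.Gamma (1 - δ) * (1 - δ)) := by
            rw [← mul_assoc, key]
        _ ≤ Real.Gamma (δ + 1) * (Real.pi * δ) := by
            apply mul_le_mul_of_nonneg_left h2 hGδ1pos.le
    have hπδ : 0 < Real.pi * δ := by positivity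
    have : 1 - δ ≤ Real.Gamma (δ + 1) := by
      have := (mul_le_mul_iff_left₀ hπδ).mp (by nlinarith [h3] : (1 - δ) * (Real.pi * δ) ≤ Real.Gamma (δ + 1) * (Real.pi * δ))
      linarith
    linarith
  · have hstep : Real.Gamma (δ + 2) = (δ + 1) * Real.Gamma (δ + 1) := by
      have h := Real.Gamma_add_one (s := δ + 1) (by linarith)
      rw [show (δ + 1) + 1 = δ + 2 by ring] at h
      exact h
    have h2 : 1 ≤ Real.Gamma (δ + 2) := one_le_Gamma_of_two_le _ (by linarith)
    have hGpos : 0 < Real.Gamma (δ + 1) := Real.Gamma_pos_of_pos (by linarith)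
    nlinarith

lemma norm_cpow_real (x : ℝ) (hx : 0 < x) (w : ℂ) : ‖(x:ℂ)^w‖ = x ^ w.re := by
  rw [Complex.norm_cpow_eq_rpow_re_of_pos hx]

lemma one_sub_cast (x : ℝ) : (1:ℂ) - (x:ℂ) = ((1 - x : ℝ) : ℂ) := by push_cast; ring

set_option maxHeartbeats 1000000 in
lemma beta_bound (c : ℂ) (hre1 : 1 < c.re) (hre2 : c.re ≤ 2)
    (him : 1/2 ≤ |c.im|) (δ : ℝ) (hδ0 : 0 < δ) (hδ1 : δ < 1) :
    ‖Complex.betaIntegral c (δ:ℂ)‖ ≤ (30/δ) * (1 + |c.im|) ^ (-δ) := by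
  set τ : ℝ := |c.im| with hτdef
  set η : ℝ := 1/(2*(1+τ)) with hηdef
  have hτ0 : 0 < τ := by linarith
  have h1τ : (0:ℝ) < 1 + τ := by linarith
  have hη0 : 0 < η := by positivity
  have hη3 : η ≤ 1/3 := by
    rw [hηdef, div_le_div_iff₀ (by linarith) (by norm_num)]
    linarith
  have hη1 : η < 1 := by linarith
  have hηle : η ≤ 1 - η := by linarith
  have hcne : c ≠ 0 := fun h => by rw [h] at hre1; simp at hre1; linarith
  have hcnorm : τ ≤ ‖c‖ := Complex.abs_im_le_norm c
  have hcpos : 0 < ‖c‖ := lt_of_lt_of_le (by linarith) hcnorm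
  have hinv : 1/‖c‖ ≤ 6*η := by
    have h1 : 1/‖c‖ ≤ 1/τ := by
      apply one_div_le_one_div_of_le hτ0 hcnorm
    have h2 : 1/τ ≤ 3/(1+τ) := by
      rw [div_le_div_iff₀ hτ0 h1τ]; linarith
    have h3 : (3:ℝ)/(1+τ) = 6*η := by rw [hηdef]; field_simp; ring
    linarith
  -- the integrand
  set f : ℝ → ℂ := fun x => (x:ℂ)^(c-1) * (1-(x:ℂ))^((δ:ℂ)-1) with hfdef
  have hδre : (0:ℝ) < ((δ:ℂ)).re := by simpa using hδ0
  have hInt : IntervalIntegrable f volume 0 1 :=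
    Complex.betaIntegral_convergent (by linarith) hδre
  have hsub1 : Set.uIcc (0:ℝ) η ⊆ Set.uIcc (0:ℝ) 1 := by
    rw [Set.uIcc_of_le hη0.le, Set.uIcc_of_le (by norm_num : (0:ℝ) ≤ 1)]
    apply Set.Icc_subset_Icc <;> linarith
  have hsub2 : Set.uIcc η (1-η) ⊆ Set.uIcc (0:ℝ) 1 := by
    rw [Set.uIcc_of_le hηle, Set.uIcc_of_le (by norm_num : (0:ℝ) ≤ 1)]
    apply Set.Icc_subset_Icc <;> linarith
  have hsub3 : Set.uIcc (1-η) (1:ℝ) ⊆ Set.uIcc (0:ℝ) 1 := by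
    rw [Set.uIcc_of_le (by linarith : 1-η ≤ (1:ℝ)), Set.uIcc_of_le (by norm_num : (0:ℝ) ≤ 1)]
    apply Set.Icc_subset_Icc <;> linarith
  have hIntA : IntervalIntegrable f volume 0 η := hInt.mono_set hsub1
  have hIntB : IntervalIntegrable f volume η (1-η) := hInt.mono_set hsub2
  have hIntC : IntervalIntegrable f volume (1-η) 1 := hInt.mono_set hsub3
  have hsplit : Complex.betaIntegral c (δ:ℂ) =
      (∫ x in (0:ℝ)..η, f x) + ((∫ x in η..(1-η), f x) + (∫ x in (1-η)..(1:ℝ), f x)) := by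
    rw [Complex.betaIntegral]
    rw [intervalIntegral.integral_add_adjacent_intervals hIntB hIntC,
      intervalIntegral.integral_add_adjacent_intervals hIntA (hIntB.trans hIntC)]
  -- pointwise norm of the integrand
  have hnorm : ∀ x:ℝ, 0 < x → x < 1 → ‖f x‖ = x^(c.re-1) * (1-x)^(δ-1) := by
    intro x hx hx1
    rw [hfdef]
    simp only
    rw [norm_mul, norm_cpow_real x hx, one_sub_cast, norm_cpow_real (1-x) (by linarith)]
    norm_num
  -- Piece 1 : [0, η]
  have hP1 : ‖∫ x in (0:ℝ)..η, f x‖ ≤ 2*η := by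
    have hb : ∀ x ∈ Set.uIoc (0:ℝ) η, ‖f x‖ ≤ 2 := by
      intro x hx
      rw [Set.uIoc_of_le hη0.le] at hx
      have hx0 : 0 < x := hx.1
      have hxη : x ≤ η := hx.2
      have hx1 : x < 1 := lt_of_le_of_lt hxη hη1
      rw [hnorm x hx0 hx1]
      have b1 : x^(c.re-1) ≤ 1 := Real.rpow_le_one hx0.le hx1.le (by linarith)
      have h23 : (2:ℝ)/3 ≤ 1-x := by linarith
      have e1 : (1-x)^(δ-1) ≤ (1-x)^(-1:ℝ) :=
        Real.rpow_le_rpow_of_exponent_ge (by linarith) (by linarith) (by linarith)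
      have e2 : (1-x)^(-1:ℝ) = (1-x)⁻¹ := Real.rpow_neg_one _
      have e3 : (1-x)⁻¹ ≤ 3/2 := by
        rw [inv_le_comm₀ (by linarith) (by norm_num)]
        linarith
      have b2 : (1-x)^(δ-1) ≤ 2 := by rw [e2] at e1; linarith
      have hnn : (0:ℝ) ≤ (1-x)^(δ-1) := Real.rpow_nonneg (by linarith) _
      nlinarith
    have := intervalIntegral.norm_integral_le_of_norm_le_const hb
    rw [sub_zero, abs_of_pos hη0] at this
    linarith
  -- Piece 3 : [1-η, 1]
  have hδC1 : ((δ:ℂ)-1) ≠ 0 := by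
    intro h
    have : ((δ:ℂ)-1).re = 0 := by rw [h]; simp
    simp at this
    linarith
  have hgint : IntervalIntegrable (fun x:ℝ => (1-x)^(δ-1)) volume (1-η) 1 := by
    have h0 : IntervalIntegrable (fun u:ℝ => u^(δ-1)) volume 0 η :=
      intervalIntegrable_rpow' (by linarith)
    have h1 := h0.comp_sub_left 1
    simpa using h1.symm
  have hval : (∫ x in (1-η)..(1:ℝ), (1-x)^(δ-1)) = η^δ/δ := by
    have h1 : (∫ x in (1-η)..(1:ℝ), ((1:ℝ)-x)^(δ-1)) =
        ∫ x in (1-(1:ℝ))..(1-(1-η)), x^(δ-1) :=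
      intervalIntegral.integral_comp_sub_left (fun u => u^(δ-1)) 1
    rw [h1]
    norm_num
    rw [integral_rpow (Or.inl (by linarith))]
    have e : δ-1+1 = δ := by ring
    rw [e, Real.zero_rpow (by linarith : δ ≠ 0)]
    ring
  have hP3 : ‖∫ x in (1-η)..(1:ℝ), f x‖ ≤ η^δ/δ := by
    have hb := intervalIntegral.norm_integral_le_of_norm_le
      (f := f) (g := fun x => (1-x)^(δ-1)) (μ := volume) (a := 1-η) (b := 1) (by linarith) ?_ hgint
    · rwa [hval] at hb
    · filter_upwards with t ht
      have ht0 : 0 < t := by linarith [ht.1]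
      rcases eq_or_lt_of_le ht.2 with h1 | h1
      · rw [h1]
        have hf1 : f 1 = 0 := by
          rw [hfdef]
          simp [Complex.zero_cpow hδC1]
        rw [hf1]
        simp [Real.zero_rpow (show δ-1 ≠ 0 by linarith)]
      · rw [hnorm t ht0 h1]
        have b1 : t^(c.re-1) ≤ 1 := Real.rpow_le_one ht0.le h1.le (by linarith)
        have hnn : (0:ℝ) ≤ (1-t)^(δ-1) := Real.rpow_nonneg (by linarith) _
        nlinarith
  -- Piece 2 : [η, 1-η] via integration by parts
  set G : ℝ → ℂ := fun x => (x:ℂ)^c * (1-(x:ℂ))^((δ:ℂ)-2) with hGdef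
  set F : ℝ → ℂ := fun x => (x:ℂ)^c * (1-(x:ℂ))^((δ:ℂ)-1) / c with hFdef
  have hδC2 : ((δ:ℂ)-2) ≠ -1 := by
    intro h
    have : ((δ:ℂ)-2).re = -1 := by rw [h]; simp
    simp at this
    linarith
  have hcC1 : (c-1) ≠ -1 := by
    intro h
    have : (c-1).re = -1 := by rw [h]; simp
    simp at this
    linarith
  have hderiv : ∀ x ∈ Set.uIcc η (1-η),
      HasDerivAt F (f x + ((1-(δ:ℂ))/c) * G x) x := by
    intro x hx
    rw [Set.uIcc_of_le hηle] at hx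
    have hx0 : 0 < x := lt_of_lt_of_le hη0 hx.1
    have hx1 : x < 1 := lt_of_le_of_lt hx.2 (by linarith)
    have h1x : (0:ℝ) < 1 - x := by linarith
    -- derivative of x ↦ x^c
    have d1 : HasDerivAt (fun y:ℝ => (y:ℂ)^c) (c * (x:ℂ)^(c-1)) x := by
      have h0 := hasDerivAt_ofReal_cpow_const' hx0.ne' hcC1
      have e : c-1+1 = c := by ring
      rw [e] at h0
      have h0' := h0.const_mul c
      have efun : (fun y:ℝ => c * ((y:ℂ)^c/c)) = fun y:ℝ => (y:ℂ)^c := by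
        funext y; field_simp
      rwa [efun] at h0'
    -- derivative of x ↦ (1-x)^(δ-1)
    have d2 : HasDerivAt (fun y:ℝ => (1-(y:ℂ))^((δ:ℂ)-1))
        ((-1:ℝ) • (((δ:ℂ)-1) * (1-(x:ℂ))^((δ:ℂ)-2))) x := by
      have ho := hasDerivAt_ofReal_cpow_const' (show (1-x:ℝ) ≠ 0 by linarith) hδC2
      have e2 : (δ:ℂ)-2+1 = (δ:ℂ)-1 := by ring
      rw [e2] at ho
      have ho' := ho.const_mul ((δ:ℂ)-1)
      have efun2 : (fun t:ℝ => ((δ:ℂ)-1) * ((t:ℂ)^((δ:ℂ)-1)/((δ:ℂ)-1))) =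
          fun t:ℝ => (t:ℂ)^((δ:ℂ)-1) := by
        funext t; field_simp
      rw [efun2] at ho'
      have hi : HasDerivAt (fun y:ℝ => 1 - y) (-1:ℝ) x := by
        simpa using (hasDerivAt_id x).const_sub 1
      have hcomp := HasDerivAt.scomp x ho' hi
      have efun3 : ((fun t:ℝ => (t:ℂ)^((δ:ℂ)-1)) ∘ (fun y:ℝ => 1 - y)) =
          fun y:ℝ => (1-(y:ℂ))^((δ:ℂ)-1) := by
        funext y; simp only [Function.comp_apply]; rw [← one_sub_cast]
      have ederiv : ((-1:ℝ) • (((δ:ℂ)-1) * ((1-x:ℝ):ℂ)^((δ:ℂ)-2))) =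
          ((-1:ℝ) • (((δ:ℂ)-1) * (1-(x:ℂ))^((δ:ℂ)-2))) := by
        rw [← one_sub_cast]
      rw [efun3, ederiv] at hcomp
      exact hcomp
    have dmul := (d1.mul d2).div_const c
    have heq : f x + ((1-(δ:ℂ))/c) * G x =
        (c * (x:ℂ)^(c-1) * (1-(x:ℂ))^((δ:ℂ)-1) +
          (x:ℂ)^c * ((-1:ℝ) • (((δ:ℂ)-1) * (1-(x:ℂ))^((δ:ℂ)-2)))) / c := by
      rw [hfdef, hGdef]
      simp only [neg_smul, one_smul]
      field_simp
      ring
    rw [heq]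
    exact dmul
  have hGint : IntervalIntegrable G volume η (1-η) := by
    apply ContinuousOn.intervalIntegrable
    apply continuousOn_of_forall_continuousAt
    intro x hx
    rw [Set.uIcc_of_le hηle] at hx
    have hx0 : 0 < x := lt_of_lt_of_le hη0 hx.1
    have hx1 : x < 1 := lt_of_le_of_lt hx.2 (by linarith)
    have c1 : ContinuousAt (fun y:ℝ => (y:ℂ)^c) x :=
      continuousAt_ofReal_cpow_const x c (Or.inr hx0.ne')
    have c2 : ContinuousAt (fun y:ℝ => (1-(y:ℂ))^((δ:ℂ)-2)) x := by
      have co : ContinuousAt (fun t:ℝ => (t:ℂ)^((δ:ℂ)-2)) (1-x) :=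
        continuousAt_ofReal_cpow_const (1-x) _ (Or.inr (by intro h; linarith))
      have ci : ContinuousAt (fun y:ℝ => 1-y) x := by fun_prop
      have hcc := co.comp ci
      have efun : (fun y:ℝ => (1-(y:ℂ))^((δ:ℂ)-2)) =
          ((fun t:ℝ => (t:ℂ)^((δ:ℂ)-2)) ∘ (fun y:ℝ => 1-y)) := by
        funext y; simp only [Function.comp_apply]; rw [← one_sub_cast]
      rw [efun]
      exact hcc
    exact c1.mul c2
  have hEint : IntervalIntegrable (fun x => f x + ((1-(δ:ℂ))/c) * G x) volume η (1-η) :=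
    hIntB.add (hGint.const_mul _)
  have hIBP : (∫ x in η..(1-η), (f x + ((1-(δ:ℂ))/c) * G x)) = F (1-η) - F η :=
    intervalIntegral.integral_eq_sub_of_hasDerivAt hderiv hEint
  have hmid : (∫ x in η..(1-η), f x) =
      F (1-η) - F η - ((1-(δ:ℂ))/c) * ∫ x in η..(1-η), G x := by
    rw [intervalIntegral.integral_add hIntB (hGint.const_mul _),
      intervalIntegral.integral_const_mul] at hIBP
    linear_combination hIBP
  -- bounds on the three terms of the middle piece
  have hηδ : η^(δ-1) * η = η^δ := by
    rw [← Real.rpow_add_one hη0.ne' (δ-1)]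
    norm_num
  have hηleδ : η ≤ η^δ := by
    have := Real.rpow_le_rpow_of_exponent_ge hη0 hη1.le hδ1.le
    rwa [Real.rpow_one] at this
  have hδnn : (0:ℝ) ≤ η^δ := Real.rpow_nonneg hη0.le _
  have hnormF : ∀ x:ℝ, 0 < x → x < 1 → ‖F x‖ = x^(c.re) * (1-x)^(δ-1) / ‖c‖ := by
    intro x hx hx1
    rw [hFdef]
    simp only
    rw [norm_div, norm_mul, norm_cpow_real x hx, one_sub_cast, norm_cpow_real (1-x) (by linarith)]
    norm_num
  have hF1 : ‖F (1-η)‖ ≤ 6*η^δ := by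
    rw [hnormF (1-η) (by linarith) (by linarith)]
    have b1 : (1-η)^(c.re) ≤ 1 := Real.rpow_le_one (by linarith) (by linarith) (by linarith)
    have e : (1:ℝ) - (1-η) = η := by ring
    rw [e]
    have hnn : (0:ℝ) ≤ η^(δ-1) := Real.rpow_nonneg hη0.le _
    calc (1-η)^(c.re) * η^(δ-1) / ‖c‖
        ≤ 1 * η^(δ-1) * (1/‖c‖) := by
          rw [div_eq_mul_one_div]
          apply mul_le_mul_of_nonneg_right _ (by positivity)
          nlinarith
      _ ≤ η^(δ-1) * (6*η) := by
          rw [one_mul]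
          exact mul_le_mul_of_nonneg_left hinv hnn
      _ = 6*η^δ := by rw [← hηδ]; ring
  have hF2 : ‖F η‖ ≤ 12*η^δ := by
    rw [hnormF η hη0 hη1]
    have b1 : η^(c.re) ≤ 1 := Real.rpow_le_one hη0.le hη1.le (by linarith)
    have e1 : (1-η)^(δ-1) ≤ (1-η)^(-1:ℝ) :=
      Real.rpow_le_rpow_of_exponent_ge (by linarith) (by linarith) (by linarith)
    have e2 : (1-η)^(-1:ℝ) = (1-η)⁻¹ := Real.rpow_neg_one _
    have e3 : (1-η)⁻¹ ≤ 3/2 := by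
      rw [inv_le_comm₀ (by linarith) (by norm_num)]
      linarith
    have b2 : (1-η)^(δ-1) ≤ 2 := by rw [e2] at e1; linarith
    have hnn : (0:ℝ) ≤ (1-η)^(δ-1) := Real.rpow_nonneg (by linarith) _
    calc η^(c.re) * (1-η)^(δ-1) / ‖c‖
        ≤ 1 * 2 * (1/‖c‖) := by
          rw [div_eq_mul_one_div]
          apply mul_le_mul_of_nonneg_right _ (by positivity)
          nlinarith
      _ ≤ 2 * (6*η) := by nlinarith [hinv, hcpos]
      _ ≤ 12*η^δ := by nlinarith
  have hg2int : IntervalIntegrable (fun x:ℝ => (1-x)^(δ-2)) volume η (1-η) := by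
    have h0 : IntervalIntegrable (fun u:ℝ => u^(δ-2)) volume η (1-η) := by
      apply intervalIntegrable_rpow (Or.inr ?_)
      rw [Set.uIcc_of_le hηle]
      intro h
      exact absurd h.1 (by linarith)
    have h1 := h0.comp_sub_left 1
    have e1 : (1:ℝ) - η = 1 - η := rfl
    have e2 : (1:ℝ) - (1-η) = η := by ring
    rw [e2] at h1
    exact h1.symm
  have hg2val : (∫ x in η..(1-η), (1-x)^(δ-2)) = (η^(δ-1) - (1-η)^(δ-1))/(1-δ) := by
    have h1 : (∫ x in η..(1-η), ((1:ℝ)-x)^(δ-2)) =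
        ∫ x in (1-(1-η))..(1-η), x^(δ-2) :=
      intervalIntegral.integral_comp_sub_left (fun u => u^(δ-2)) 1
    have e2 : (1:ℝ) - (1-η) = η := by ring
    rw [h1, e2, integral_rpow (Or.inr ⟨by intro h; linarith, by
      rw [Set.uIcc_of_le hηle]; intro h; exact absurd h.1 (by linarith)⟩)]
    have e3 : δ-2+1 = δ-1 := by ring
    rw [e3]
    rw [div_eq_div_iff (by intro h; linarith) (by intro h; linarith)]
    ring
  have hGbound : ‖((1-(δ:ℂ))/c) * ∫ x in η..(1-η), G x‖ ≤ 6*η^δ := by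
    have hb := intervalIntegral.norm_integral_le_of_norm_le
      (f := G) (g := fun x => (1-x)^(δ-2)) (μ := volume) (a := η) (b := 1-η) hηle ?_ hg2int
    · have hnormc : ‖((1-(δ:ℂ))/c)‖ = (1-δ)/‖c‖ := by
        rw [norm_div]
        congr 1
        rw [show (1-(δ:ℂ)) = ((1-δ:ℝ):ℂ) by push_cast; ring, Complex.norm_real, Real.norm_eq_abs,
          abs_of_pos (by linarith)]
      rw [norm_mul, hnormc]
      have hvpos : (0:ℝ) ≤ (η^(δ-1) - (1-η)^(δ-1))/(1-δ) := by
        apply div_nonneg _ (by linarith)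
        have : (1-η)^(δ-1) ≤ η^(δ-1) :=
          Real.rpow_le_rpow_of_nonpos hη0 hηle (by linarith)
        linarith
      rw [hg2val] at hb
      have step : (1-δ)/‖c‖ * ‖∫ x in η..(1-η), G x‖ ≤
          (1-δ)/‖c‖ * ((η^(δ-1) - (1-η)^(δ-1))/(1-δ)) := by
        apply mul_le_mul_of_nonneg_left hb (div_nonneg (by linarith) hcpos.le)
      have e4 : (1-δ)/‖c‖ * ((η^(δ-1) - (1-η)^(δ-1))/(1-δ)) =
          (η^(δ-1) - (1-η)^(δ-1)) * (1/‖c‖) := by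
        field_simp [ne_of_gt hcpos, show (1:ℝ)-δ ≠ 0 by linarith]
      rw [e4] at step
      have hnn1 : (0:ℝ) ≤ (1-η)^(δ-1) := Real.rpow_nonneg (by linarith) _
      have hnn2 : (0:ℝ) ≤ η^(δ-1) := Real.rpow_nonneg hη0.le _
      have step2 : (η^(δ-1) - (1-η)^(δ-1)) * (1/‖c‖) ≤ η^(δ-1) * (6*η) := by
        apply mul_le_mul (by linarith) hinv (by positivity) hnn2
      have e5 : η^(δ-1) * (6*η) = 6*η^δ := by rw [← hηδ]; ring
      linarith
    · filter_upwards with t ht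
      have ht0 : 0 < t := lt_trans hη0 ht.1
      have ht1 : t < 1 := by linarith [ht.2]
      rw [hGdef]
      simp only
      rw [norm_mul, norm_cpow_real t ht0, one_sub_cast, norm_cpow_real (1-t) (by linarith)]
      have b1 : t^(c.re) ≤ 1 := Real.rpow_le_one ht0.le ht1.le (by linarith)
      have hre2' : ((δ:ℂ)-2).re = δ-2 := by simp
      rw [hre2']
      have hnn : (0:ℝ) ≤ (1-t)^(δ-2) := Real.rpow_nonneg (by linarith) _
      nlinarith
  have hP2 : ‖∫ x in η..(1-η), f x‖ ≤ 24*η^δ := by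
    rw [hmid]
    calc ‖F (1-η) - F η - ((1-(δ:ℂ))/c) * ∫ x in η..(1-η), G x‖
        ≤ ‖F (1-η) - F η‖ + ‖((1-(δ:ℂ))/c) * ∫ x in η..(1-η), G x‖ := norm_sub_le _ _
      _ ≤ (‖F (1-η)‖ + ‖F η‖) + ‖((1-(δ:ℂ))/c) * ∫ x in η..(1-η), G x‖ := by
          have := norm_sub_le (F (1-η)) (F η)
          linarith
      _ ≤ (6*η^δ + 12*η^δ) + 6*η^δ := by linarith
      _ = 24*η^δ := by ring
  -- assemble
  have htot : ‖Complex.betaIntegral c (δ:ℂ)‖ ≤ 2*η + 24*η^δ + η^δ/δ := by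
    rw [hsplit]
    calc ‖(∫ x in (0:ℝ)..η, f x) + ((∫ x in η..(1-η), f x) + (∫ x in (1-η)..(1:ℝ), f x))‖
        ≤ ‖∫ x in (0:ℝ)..η, f x‖ + (‖∫ x in η..(1-η), f x‖ + ‖∫ x in (1-η)..(1:ℝ), f x‖) := by
          refine (norm_add_le _ _).trans ?_
          have := norm_add_le (∫ x in η..(1-η), f x) (∫ x in (1-η)..(1:ℝ), f x)
          linarith
      _ ≤ 2*η + 24*η^δ + η^δ/δ := by linarith
  have hηpow : η^δ ≤ (1+τ)^(-δ) := by
    have h1 : η ≤ (1+τ)⁻¹ := by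
      rw [hηdef, inv_eq_one_div, div_le_div_iff₀ (by linarith) (by linarith)]
      nlinarith
    have h2 : η^δ ≤ ((1+τ)⁻¹)^δ := Real.rpow_le_rpow hη0.le h1 hδ0.le
    rwa [Real.inv_rpow (by linarith), ← Real.rpow_neg (by linarith)] at h2
  have hfin : 2*η + 24*η^δ + η^δ/δ ≤ (30/δ) * (1+τ)^(-δ) := by
    rw [show (30/δ)*(1+τ)^(-δ) = (30*(1+τ)^(-δ))/δ from by ring, le_div_iff₀ hδ0]
    have e : (2*η + 24*η^δ + η^δ/δ)*δ = 2*η*δ + 24*η^δ*δ + (η^δ/δ)*δ := by ring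
    rw [e, div_mul_cancel₀ _ hδ0.ne']
    nlinarith [hηpow, hηleδ, hδnn, hη0]
  linarith

lemma Gamma_le_one_of_mem' (x : ℝ) (h1 : 1 ≤ x) (h2 : x ≤ 2) : Real.Gamma x ≤ 1 := by
  have h := Real.convexOn_Gamma.2 (by norm_num : (1:ℝ) ∈ Set.Ioi 0)
    (by norm_num : (2:ℝ) ∈ Set.Ioi 0) (by linarith : (0:ℝ) ≤ 2 - x)
    (by linarith : (0:ℝ) ≤ x - 1) (by ring)
  have ht : x = (2 - x) • (1:ℝ) + (x - 1) • (2:ℝ) := by simp; ring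
  rw [← ht, Real.Gamma_one, Real.Gamma_two] at h
  simp only [smul_eq_mul, mul_one] at h
  linarith

/-- the fractional-shift bound: `‖Γ(c)‖ ≤ 100 (1+|Im c|)^{-δ} ‖Γ(c+δ)‖`. -/
lemma Gamma_ratio_bound (c : ℂ) (hre1 : 1 < c.re) (hre2 : c.re ≤ 2)
    (him : 1/2 ≤ |c.im|) (δ : ℝ) (hδ0 : 0 ≤ δ) (hδ1 : δ < 1) :
    ‖Complex.Gamma c‖ ≤ 100 * (1 + |c.im|) ^ (-δ) * ‖Complex.Gamma (c + δ)‖ := by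
  rcases eq_or_lt_of_le hδ0 with h0 | h0
  · -- δ = 0 : trivial
    rw [← h0]
    simp only [neg_zero, Real.rpow_zero, Complex.ofReal_zero, add_zero, mul_one]
    nlinarith [norm_nonneg (Complex.Gamma c)]
  -- now 0 < δ
  have hGδ : Complex.Gamma ((δ:ℂ)) = (Real.Gamma δ : ℂ) := Complex.Gamma_ofReal δ
  have hGδpos : 0 < Real.Gamma δ := Real.Gamma_pos_of_pos h0
  have hbeta := Complex.Gamma_mul_Gamma_eq_betaIntegral
    (show 0 < c.re by linarith) (show 0 < ((δ:ℂ)).re by simpa using h0)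
  -- ‖Γ c‖ * Γ δ = ‖Γ (c+δ)‖ * ‖B‖
  have hnormeq : ‖Complex.Gamma c‖ * Real.Gamma δ =
      ‖Complex.Gamma (c + δ)‖ * ‖Complex.betaIntegral c (δ:ℂ)‖ := by
    have := congrArg norm hbeta
    rw [norm_mul, norm_mul, hGδ] at this
    rwa [Complex.norm_real, Real.norm_eq_abs, _root_.abs_of_pos hGδpos] at this
  have hB := beta_bound c hre1 hre2 him δ h0 hδ1
  have hΓδ1 : (1:ℝ)/3 ≤ Real.Gamma (δ + 1) := Gamma_add_one_ge δ h0 hδ1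
  have hpw : (0:ℝ) ≤ (1+|c.im|)^(-δ) := Real.rpow_nonneg (by positivity) _
  have hnn := norm_nonneg (Complex.Gamma (c+δ))
  have h2 : Real.Gamma (δ+1) = δ * Real.Gamma δ := Real.Gamma_add_one h0.ne'
  have h3 : (30:ℝ)/δ ≤ 100 * Real.Gamma δ := by
    rw [div_le_iff₀ h0]
    nlinarith
  have hmul : ‖Complex.Gamma c‖ * Real.Gamma δ ≤
      (100 * (1+|c.im|)^(-δ) * ‖Complex.Gamma (c+δ)‖) * Real.Gamma δ := by
    rw [hnormeq]
    calc ‖Complex.Gamma (c+δ)‖ * ‖Complex.betaIntegral c (δ:ℂ)‖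
        ≤ ‖Complex.Gamma (c+δ)‖ * ((30/δ)*(1+|c.im|)^(-δ)) :=
          mul_le_mul_of_nonneg_left hB hnn
      _ ≤ ‖Complex.Gamma (c+δ)‖ * ((100*Real.Gamma δ)*(1+|c.im|)^(-δ)) := by
          apply mul_le_mul_of_nonneg_left (mul_le_mul_of_nonneg_right h3 hpw) hnn
      _ = (100*(1+|c.im|)^(-δ)*‖Complex.Gamma (c+δ)‖)*Real.Gamma δ := by ring
  exact le_of_mul_le_mul_right hmul hGδpos

lemma norm_shift_ge (a τ : ℝ) (hτ : 1/2 ≤ |τ|) (n : ℕ) :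
    ((1+|τ|)/3)^n ≤ ‖∏ k ∈ Finset.range n, ((a:ℂ) + τ*I + k)‖ := by
  rw [show ‖∏ k ∈ Finset.range n, ((a:ℂ) + τ*I + k)‖ =
      ∏ k ∈ Finset.range n, ‖((a:ℂ) + τ*I + k)‖ from by
    rw [norm_prod]]
  rw [show ((1+|τ|)/3)^n = ∏ _k ∈ Finset.range n, ((1+|τ|)/3) from by
    rw [Finset.prod_const, Finset.card_range]]
  apply Finset.prod_le_prod
  · intro k _; positivity
  · intro k _
    have him : ((a:ℂ) + τ*I + k).im = τ := by simp
    have := Complex.abs_im_le_norm ((a:ℂ) + τ*I + k)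
    rw [him] at this
    have h3 : (1+|τ|)/3 ≤ |τ| := by
      rw [div_le_iff₀ (by norm_num)]
      cases abs_cases τ <;> nlinarith [abs_nonneg τ]
    linarith

lemma norm_shift_le (a τ : ℝ) (B : ℝ) (ha : |a| ≤ B) (n : ℕ) (hn : (n:ℝ) ≤ 2) :
    ‖∏ k ∈ Finset.range n, ((a:ℂ) + τ*I + k)‖ ≤ ((B+3)*(1+|τ|))^n := by
  rw [show ‖∏ k ∈ Finset.range n, ((a:ℂ) + τ*I + k)‖ =
      ∏ k ∈ Finset.range n, ‖((a:ℂ) + τ*I + k)‖ from by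
    rw [norm_prod]]
  rw [show ((B+3)*(1+|τ|))^n = ∏ _k ∈ Finset.range n, ((B+3)*(1+|τ|)) from by
    rw [Finset.prod_const, Finset.card_range]]
  apply Finset.prod_le_prod
  · intro k _; positivity
  · intro k hk
    have hkn : (k:ℝ) ≤ 2 := by
      have := Finset.mem_range.mp hk
      have : (k:ℝ) < n := by exact_mod_cast this
      linarith
    have hre : ((a:ℂ) + τ*I + k).re = a + k := by simp
    have him : ((a:ℂ) + τ*I + k).im = τ := by simp
    have := Complex.norm_le_abs_re_add_abs_im ((a:ℂ) + τ*I + k)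
    rw [hre, him] at this
    have h1 : |a + (k:ℝ)| ≤ B + 2 := by
      cases abs_cases (a + (k:ℝ)) <;> cases abs_cases a <;> nlinarith
    have h2 : |τ| ≥ 0 := abs_nonneg τ
    have h0B : (0:ℝ) ≤ B := le_trans (abs_nonneg a) ha
    nlinarith [mul_nonneg (show (0:ℝ) ≤ B+2 by linarith) (abs_nonneg τ)]

set_option maxHeartbeats 2000000 in
lemma Gamma_chain (B : ℝ) (hB : 1 ≤ B) :
    ∃ K : ℝ, 0 < K ∧ ∀ σ₁ σ₂ τ : ℝ, -B ≤ σ₁ → σ₁ ≤ 0 → 1/2 ≤ σ₂ → σ₂ ≤ B → 1/2 ≤ |τ| →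
      ‖Complex.Gamma ((σ₁:ℂ) + τ*I)‖ ≤
        K * (1+|τ|)^(σ₁-σ₂) * ‖Complex.Gamma ((σ₂:ℂ) + τ*I)‖ := by
  set N2 : ℕ := ⌈2*B+2⌉₊ with hN2
  refine ⟨100 * 3^N2 * (B+3)^2, by positivity, ?_⟩
  intro σ₁ σ₂ τ h1 h2 h3 h4 hτ
  have hτ0 : τ ≠ 0 := by intro h; rw [h] at hτ; simp at hτ; linarith
  set A : ℝ := 1 + |τ| with hA
  have hA1 : (3:ℝ)/2 ≤ A := by have := abs_nonneg τ; simp [hA]; linarith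
  have hA0 : (0:ℝ) < A := by linarith
  -- integer part M
  set M : ℕ := ⌊2 - σ₁⌋₊ with hM
  have hMle : (M:ℝ) ≤ 2 - σ₁ := Nat.floor_le (by linarith)
  have hMgt : 2 - σ₁ < M + 1 := Nat.lt_floor_add_one _
  set c₀ : ℝ := σ₁ + M with hc₀
  have hc₀1 : 1 < c₀ := by simp only [hc₀]; linarith
  have hc₀2 : c₀ ≤ 2 := by simp only [hc₀]; linarith
  have hMB : (M:ℝ) ≤ B + 2 := by linarith
  -- fractional part
  set r : ℝ := σ₂ - c₀ with hr
  set Q : ℤ := ⌊r⌋ with hQ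
  set δ₁ : ℝ := r - Q with hδ₁
  have hδ₁0 : 0 ≤ δ₁ := by simp only [hδ₁]; linarith [Int.floor_le r]
  have hδ₁1 : δ₁ < 1 := by simp only [hδ₁]; linarith [Int.lt_floor_add_one r]
  have hQlb : (-2:ℝ) ≤ (Q:ℝ) := by
    have h5 : (-3:ℝ)/2 ≤ r := by simp only [hr, hc₀]; linarith
    have : (-2:ℤ) ≤ Q := by
      rw [hQ, Int.le_floor]
      push_cast
      linarith
    exact_mod_cast this
  have hQub : (Q:ℝ) ≤ B := by
    have h5 : r ≤ B - 1 := by simp only [hr, hc₀]; linarith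
    linarith [Int.floor_le r]
  -- step lemmas
  have hstepup : ∀ (a : ℝ) (n : ℕ),
      ‖Complex.Gamma ((a:ℂ) + τ*I)‖ ≤
        (3/A)^n * ‖Complex.Gamma (((a+n:ℝ):ℂ) + τ*I)‖ := by
    intro a n
    have hwim' : ((a:ℂ) + τ*I).im ≠ 0 := by simpa using hτ0
    have hsh := Gamma_shift ((a:ℂ) + τ*I) hwim' n
    have hend : ((a:ℂ) + τ*I) + (n:ℂ) = ((a+n:ℝ):ℂ) + τ*I := by push_cast; ring
    rw [hend] at hsh
    have hP1 : ((1+|τ|)/3)^n ≤ ‖∏ k ∈ Finset.range n, ((a:ℂ) + τ*I + k)‖ :=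
      norm_shift_ge a τ hτ n
    have he : ‖Complex.Gamma (((a+n:ℝ):ℂ) + τ*I)‖ =
        ‖∏ k ∈ Finset.range n, ((a:ℂ) + τ*I + k)‖ * ‖Complex.Gamma ((a:ℂ) + τ*I)‖ := by
      rw [hsh, norm_mul]
    rw [he, ← mul_assoc]
    have hg := norm_nonneg (Complex.Gamma ((a:ℂ) + τ*I))
    have hsc : (1:ℝ) ≤ (3/A)^n * ‖∏ k ∈ Finset.range n, ((a:ℂ) + τ*I + k)‖ := by
      calc (1:ℝ) = (3/A)^n * (A/3)^n := by
            rw [← mul_pow, show (3/A)*(A/3) = 1 from by field_simp]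
            simp
        _ ≤ _ := by
            apply mul_le_mul_of_nonneg_left _ (by positivity)
            exact hP1
    nlinarith
  have hstepdown : ∀ (a : ℝ) (n : ℕ), |a| ≤ B → (n:ℝ) ≤ 2 →
      ‖Complex.Gamma (((a+n:ℝ):ℂ) + τ*I)‖ ≤
        ((B+3)*A)^n * ‖Complex.Gamma ((a:ℂ) + τ*I)‖ := by
    intro a n ha hn
    have hwim' : ((a:ℂ) + τ*I).im ≠ 0 := by simpa using hτ0
    have hsh := Gamma_shift ((a:ℂ) + τ*I) hwim' n
    have hend : ((a:ℂ) + τ*I) + (n:ℂ) = ((a+n:ℝ):ℂ) + τ*I := by push_cast; ring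
    rw [hend] at hsh
    rw [hsh, norm_mul]
    apply mul_le_mul_of_nonneg_right _ (norm_nonneg _)
    exact norm_shift_le a τ B ha n hn
  -- step 1 : from σ₁ to c₀
  have hstep1 : ‖Complex.Gamma ((σ₁:ℂ) + τ*I)‖ ≤
      (3/A)^M * ‖Complex.Gamma (((c₀:ℝ):ℂ) + τ*I)‖ := by
    have := hstepup σ₁ M
    rwa [show σ₁ + (M:ℝ) = c₀ from rfl] at this
  -- step 2 : fractional step from c₀ to c₀ + δ₁
  have hstep2 : ‖Complex.Gamma (((c₀:ℝ):ℂ) + τ*I)‖ ≤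
      100 * A^(-δ₁) * ‖Complex.Gamma (((c₀+δ₁:ℝ):ℂ) + τ*I)‖ := by
    have hre : (((c₀:ℝ):ℂ) + τ*I).re = c₀ := by simp
    have him : (((c₀:ℝ):ℂ) + τ*I).im = τ := by simp
    have := Gamma_ratio_bound (((c₀:ℝ):ℂ) + τ*I) (by rw [hre]; exact hc₀1)
      (by rw [hre]; exact hc₀2) (by rw [him]; exact hτ) δ₁ hδ₁0 hδ₁1
    rw [him] at this
    rwa [show (((c₀:ℝ):ℂ) + τ*I) + (δ₁:ℂ) = ((c₀+δ₁:ℝ):ℂ) + τ*I from by push_cast; ring]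
      at this
  have hGnn := norm_nonneg (Complex.Gamma (((c₀+δ₁:ℝ):ℂ) + τ*I))
  have hG2nn := norm_nonneg (Complex.Gamma ((σ₂:ℂ) + τ*I))
  have hApow : ∀ x : ℝ, (0:ℝ) ≤ A^x := fun x => Real.rpow_nonneg hA0.le x
  -- step 3 and combination, by cases on the sign of Q
  have hsum : c₀ + δ₁ + (Q:ℝ) = σ₂ := by simp only [hδ₁, hr]; ring
  rcases le_or_gt 0 Q with hQpos | hQneg
  · -- Q ≥ 0 : continue upward
    set n : ℕ := Q.toNat with hn
    have hn' : ((n:ℕ):ℝ) = (Q:ℝ) := by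
      rw [hn]; exact_mod_cast Int.toNat_of_nonneg hQpos
    have hstep3 := hstepup (c₀ + δ₁) n
    rw [show c₀ + δ₁ + (n:ℝ) = σ₂ from by rw [hn']; exact hsum] at hstep3
    -- combine
    have hcomb : ‖Complex.Gamma ((σ₁:ℂ) + τ*I)‖ ≤
        ((3/A)^M * (100 * A^(-δ₁) * (3/A)^n)) * ‖Complex.Gamma ((σ₂:ℂ) + τ*I)‖ := by
      calc ‖Complex.Gamma ((σ₁:ℂ) + τ*I)‖
          ≤ (3/A)^M * ‖Complex.Gamma (((c₀:ℝ):ℂ) + τ*I)‖ := hstep1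
        _ ≤ (3/A)^M * (100 * A^(-δ₁) * ‖Complex.Gamma (((c₀+δ₁:ℝ):ℂ) + τ*I)‖) := by
            apply mul_le_mul_of_nonneg_left hstep2 (by positivity)
        _ ≤ (3/A)^M * (100 * A^(-δ₁) *
              ((3/A)^n * ‖Complex.Gamma ((σ₂:ℂ) + τ*I)‖)) := by
            apply mul_le_mul_of_nonneg_left _ (by positivity)
            apply mul_le_mul_of_nonneg_left hstep3 (by positivity)
        _ = _ := by ring
    refine hcomb.trans ?_
    apply mul_le_mul_of_nonneg_right _ hG2nn
    -- scalar bound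
    have hMn : M + n ≤ N2 := by
      have h7 : ((M:ℕ):ℝ) + ((n:ℕ):ℝ) ≤ 2*B+2 := by
        rw [hn']
        linarith
      have h8 : (2*B+2:ℝ) ≤ ((N2:ℕ):ℝ) := Nat.le_ceil _
      have : ((M+n:ℕ):ℝ) ≤ ((N2:ℕ):ℝ) := by push_cast; linarith
      exact_mod_cast this
    have escal : (3/A)^M * (100 * A^(-δ₁) * (3/A)^n) =
        100 * (3:ℝ)^(M+n) * A^(σ₁-σ₂) := by
      have e1 : ∀ m : ℕ, (3/A)^m = 3^m * A^(-(m:ℝ)) := by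
        intro m
        rw [div_pow, Real.rpow_neg hA0.le, Real.rpow_natCast]
        ring
      rw [e1 M, e1 n, pow_add]
      rw [show (3:ℝ)^M * A^(-(M:ℝ)) * (100 * A^(-δ₁) * (3^n * A^(-(n:ℝ)))) =
        100 * ((3:ℝ)^M*3^n) * (A^(-(M:ℝ)) * A^(-δ₁) * A^(-(n:ℝ))) from by ring]
      rw [← Real.rpow_add hA0, ← Real.rpow_add hA0]
      congr 1
      rw [show -(M:ℝ) + -δ₁ + -(n:ℝ) = -((M:ℝ) + δ₁ + (n:ℝ)) from by ring, hn']
      congr 1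
      have : (M:ℝ) + δ₁ + (Q:ℝ) = σ₂ - σ₁ := by
        have := hsum
        simp only [hc₀] at this
        linarith
      linarith
    rw [escal]
    have h9 : (3:ℝ)^(M+n) ≤ 3^N2 := by
      apply pow_le_pow_right₀ (by norm_num) hMn
    have h10 : (1:ℝ) ≤ (B+3)^2 := by nlinarith
    have hA2 := hApow (σ₁-σ₂)
    calc 100 * (3:ℝ)^(M+n) * A^(σ₁-σ₂) ≤ 100 * 3^N2 * A^(σ₁-σ₂) := by
          apply mul_le_mul_of_nonneg_right _ hA2
          linarith
      _ ≤ 100*3^N2*(B+3)^2*A^(σ₁-σ₂) := by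
          nlinarith [mul_nonneg (mul_nonneg (by norm_num : (0:ℝ) ≤ 100)
            (pow_nonneg (by norm_num : (0:ℝ) ≤ 3) N2)) hA2, h10]
  · -- Q < 0 : go down from σ₂
    set n : ℕ := (-Q).toNat with hn
    have hn' : ((n:ℕ):ℝ) = -(Q:ℝ) := by
      rw [hn]
      have h13 : ((-Q).toNat : ℤ) = -Q := Int.toNat_of_nonneg (by omega)
      exact_mod_cast h13
    have hn2 : ((n:ℕ):ℝ) ≤ 2 := by rw [hn']; linarith
    have hstep3 := hstepdown σ₂ n (by rw [abs_of_pos (by linarith)]; exact h4) hn2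
    rw [show σ₂ + (n:ℝ) = c₀ + δ₁ from by rw [hn']; linarith [hsum]] at hstep3
    have hcomb : ‖Complex.Gamma ((σ₁:ℂ) + τ*I)‖ ≤
        ((3/A)^M * (100 * A^(-δ₁) * ((B+3)*A)^n)) * ‖Complex.Gamma ((σ₂:ℂ) + τ*I)‖ := by
      calc ‖Complex.Gamma ((σ₁:ℂ) + τ*I)‖
          ≤ (3/A)^M * ‖Complex.Gamma (((c₀:ℝ):ℂ) + τ*I)‖ := hstep1
        _ ≤ (3/A)^M * (100 * A^(-δ₁) * ‖Complex.Gamma (((c₀+δ₁:ℝ):ℂ) + τ*I)‖) := by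
            apply mul_le_mul_of_nonneg_left hstep2 (by positivity)
        _ ≤ (3/A)^M * (100 * A^(-δ₁) *
              (((B+3)*A)^n * ‖Complex.Gamma ((σ₂:ℂ) + τ*I)‖)) := by
            apply mul_le_mul_of_nonneg_left _ (by positivity)
            apply mul_le_mul_of_nonneg_left hstep3 (by positivity)
        _ = _ := by ring
    refine hcomb.trans ?_
    apply mul_le_mul_of_nonneg_right _ hG2nn
    have escal : (3/A)^M * (100 * A^(-δ₁) * ((B+3)*A)^n) =
        100 * (3:ℝ)^M * (B+3)^n * A^(σ₁-σ₂) := by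
      have e1 : (3/A)^M = 3^M * A^(-(M:ℝ)) := by
        rw [div_pow, Real.rpow_neg hA0.le, Real.rpow_natCast]
        ring
      have e2 : ((B+3)*A)^n = (B+3)^n * A^((n:ℝ)) := by
        rw [mul_pow, Real.rpow_natCast]
      rw [e1, e2]
      rw [show (3:ℝ)^M * A^(-(M:ℝ)) * (100 * A^(-δ₁) * ((B+3)^n * A^((n:ℝ)))) =
        100 * (3:ℝ)^M * (B+3)^n * (A^(-(M:ℝ)) * A^(-δ₁) * A^((n:ℝ))) from by ring]
      rw [← Real.rpow_add hA0, ← Real.rpow_add hA0]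
      have h14 : (M:ℝ) + δ₁ + (Q:ℝ) = σ₂ - σ₁ := by
        have h15 := hsum
        simp only [hc₀] at h15
        linarith
      have hexp : -(M:ℝ) + -δ₁ + (n:ℝ) = σ₁ - σ₂ := by rw [hn']; linarith
      rw [hexp]
    rw [escal]
    have hMN : M ≤ N2 := by
      have h8 : (2*B+2:ℝ) ≤ ((N2:ℕ):ℝ) := Nat.le_ceil _
      have : ((M:ℕ):ℝ) ≤ ((N2:ℕ):ℝ) := by linarith
      exact_mod_cast this
    have h9 : (3:ℝ)^M ≤ 3^N2 := by
      apply pow_le_pow_right₀ (by norm_num) hMN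
    have h10 : (B+3)^n ≤ (B+3)^2 := by
      apply pow_le_pow_right₀ (by linarith)
      have : (n:ℝ) ≤ (2:ℕ) := by rw [hn']; push_cast; linarith
      exact_mod_cast this
    have hA2 := hApow (σ₁-σ₂)
    have h11 : (0:ℝ) ≤ (B+3)^n := by positivity
    calc 100 * (3:ℝ)^M * (B+3)^n * A^(σ₁-σ₂)
        ≤ 100 * (3:ℝ)^N2 * (B+3)^n * A^(σ₁-σ₂) := by
          apply mul_le_mul_of_nonneg_right _ hA2
          nlinarith
      _ ≤ 100*3^N2*(B+3)^2*A^(σ₁-σ₂) := by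
          nlinarith [mul_nonneg (mul_nonneg (by norm_num : (0:ℝ) ≤ 100)
            (pow_nonneg (by norm_num : (0:ℝ) ≤ 3) N2)) hA2, h10]


/-- The meromorphic formula `(2λ^z/π) Γ(-z-3) sin(πz/2) (12 - 6·2^{-z})` for the Mellin
transform `M^λ`. -/
noncomputable def Mform (lam : ℝ) (z : ℂ) : ℂ :=
  (2 * (lam : ℂ) ^ z / (Real.pi : ℂ)) * Complex.Gamma (-z - 3) *
    Complex.sin (Real.pi * z / 2) * (12 - 6 * (2 : ℂ) ^ (-z))

set_option maxHeartbeats 1000000 in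
/-- For every `C > -3` there is `K > 0` such that for all `λ > 0` and all `z = x + iy`
with `-3 < x ≤ C` and `|y| ≥ 1`, one has `|M^λ(z)| ≤ K λ^x (|y|+1)^{-x-7/2}`. -/
theorem Mform_bound (C : ℝ) (hC : -3 < C) :
    ∃ K : ℝ, 0 < K ∧ ∀ lam : ℝ, 0 < lam → ∀ z : ℂ,
      -3 < z.re → z.re ≤ C → 1 ≤ |z.im| →
        ‖Mform lam z‖ ≤ K * lam ^ z.re * (|z.im| + 1) ^ (-z.re - 7 / 2) := by
  set B : ℝ := (C+4)/2 + 2 with hBdef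
  have hB1 : 1 ≤ B := by simp only [hBdef]; linarith
  obtain ⟨K, hK0, hKch⟩ := Gamma_chain B hB1
  refine ⟨60 * K * 2^(C+7/2) + 60 * K * 2^(C+7/2), by positivity, ?_⟩
  intro lam hlam z hx1 hx2 hy
  set x : ℝ := z.re with hxdef
  set y : ℝ := z.im with hydef
  have him : z.im ≠ 0 := by intro h; rw [← hydef] at h; rw [h] at hy; simp at hy; linarith
  set σ₁ : ℝ := (-x-3)/2 with hσ₁
  set σ₂ : ℝ := (x+4)/2 with hσ₂
  set τ : ℝ := -y/2 with hτdef
  have hτabs : |τ| = |y|/2 := by rw [hτdef, abs_div, abs_neg]; norm_num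
  have hτhalf : 1/2 ≤ |τ| := by rw [hτabs]; linarith
  set e : ℝ := -x - 7/2 with hedef
  -- complex argument identities
  have harg1 : (-z-3)/2 = ((σ₁:ℝ):ℂ) + (τ:ℝ)*I := by
    rw [← Complex.re_add_im z, hσ₁, hτdef]
    push_cast
    ring
  have harg2 : (starRingEnd ℂ) ((z+4)/2) = ((σ₂:ℝ):ℂ) + (τ:ℝ)*I := by
    rw [← Complex.re_add_im z, hσ₂, hτdef]
    simp only [map_div₀, map_add, map_mul, Complex.conj_ofReal, Complex.conj_I, map_ofNat]
    push_cast
    ring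
  set N1 : ℝ := ‖Complex.Gamma ((-z-3)/2)‖ with hN1
  set D : ℝ := ‖Complex.Gamma ((z+4)/2)‖ with hD
  have hDne : Complex.Gamma ((z+4)/2) ≠ 0 := by
    apply Complex.Gamma_ne_zero
    intro m hm
    have : (((z+4)/2)).im = 0 := by rw [hm]; simp
    rw [show (((z+4)/2)).im = y/2 from by rw [← Complex.re_add_im z]; push_cast; simp; rfl] at this
    exact him (by rw [← hydef]; linarith)
  have hD0 : 0 < D := by rw [hD]; exact norm_pos_iff.mpr hDne
  have hDeq : D = ‖Complex.Gamma (((σ₂:ℝ):ℂ) + (τ:ℝ)*I)‖ := by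
    rw [hD, ← harg2, Complex.Gamma_conj, Complex.norm_conj]
  have hN1eq : N1 = ‖Complex.Gamma (((σ₁:ℝ):ℂ) + (τ:ℝ)*I)‖ := by rw [hN1, harg1]
  -- chain bound
  have hchain := hKch σ₁ σ₂ τ (by simp only [hσ₁, hBdef]; linarith)
    (by simp only [hσ₁]; linarith) (by simp only [hσ₂]; linarith)
    (by simp only [hσ₂, hBdef]; linarith) hτhalf
  rw [← hN1eq, ← hDeq] at hchain
  have hexp : σ₁ - σ₂ = e := by simp only [hσ₁, hσ₂, hedef]; ring
  rw [hexp] at hchain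
  -- convert (1+|τ|) to (|y|+1)
  have hpowcmp : (1+|τ|)^e ≤ 2^(C+7/2) * (|y|+1)^e := by
    have h1 : (|y|+1)/2 ≤ 1+|τ| := by rw [hτabs]; linarith
    have h2 : (0:ℝ) < (|y|+1)/2 := by linarith [abs_nonneg y]
    have h3 : (1+|τ|)^e ≤ ((|y|+1)/2)^e :=
      Real.rpow_le_rpow_of_nonpos h2 h1 (by simp only [hedef]; linarith)
    have h4 : ((|y|+1)/2)^e = (|y|+1)^e / 2^e :=
      Real.div_rpow (by linarith [abs_nonneg y] : (0:ℝ) ≤ |y|+1) (by norm_num : (0:ℝ) ≤ 2) e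
    have h5 : (|y|+1)^e / 2^e = (|y|+1)^e * 2^(-e) := by
      rw [Real.rpow_neg (by norm_num)]
      ring
    have h6 : (2:ℝ)^(-e) ≤ 2^(C+7/2) := by
      apply Real.rpow_le_rpow_of_exponent_le (by norm_num)
      simp only [hedef]
      linarith
    have h7 : (0:ℝ) ≤ (|y|+1)^e := Real.rpow_nonneg (by linarith [abs_nonneg y]) _
    calc (1+|τ|)^e ≤ ((|y|+1)/2)^e := h3
      _ = (|y|+1)^e * 2^(-e) := by rw [h4, h5]
      _ ≤ (|y|+1)^e * 2^(C+7/2) := mul_le_mul_of_nonneg_left h6 h7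
      _ = 2^(C+7/2) * (|y|+1)^e := by ring
  -- ratio bound
  have hratio : N1/D ≤ K * 2^(C+7/2) * (|y|+1)^e := by
    rw [div_le_iff₀ hD0]
    calc N1 ≤ K * (1+|τ|)^e * D := hchain
      _ ≤ K * (2^(C+7/2) * (|y|+1)^e) * D := by
          apply mul_le_mul_of_nonneg_right _ hD0.le
          exact mul_le_mul_of_nonneg_left hpowcmp hK0.le
      _ = K * 2^(C+7/2) * (|y|+1)^e * D := by ring
  -- norm of Mform
  have norm2pow : ∀ w:ℂ, ‖(2:ℂ)^w‖ = (2:ℝ)^(w.re) := by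
    intro w
    rw [show (2:ℂ) = ((2:ℝ):ℂ) from by norm_num,
      Complex.norm_cpow_eq_rpow_re_of_pos (by norm_num : (0:ℝ) < 2)]
  have hMeq : Mform lam z = (2*(lam:ℂ)^z/(Real.pi:ℂ)) *
      (Complex.Gamma (-z-3) * Complex.sin ((Real.pi:ℂ) * z / 2)) *
      (12 - 6*(2:ℂ)^(-z)) := by
    rw [Mform]; ring
  have hkey := key_identity z him
  have hnormfac1 : ‖2*(lam:ℂ)^z/(Real.pi:ℂ)‖ = 2*lam^x/Real.pi := by
    rw [norm_div, norm_mul,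
      Complex.norm_cpow_eq_rpow_re_of_pos hlam, Complex.norm_real, Real.norm_eq_abs,
      _root_.abs_of_pos Real.pi_pos]
    norm_num; rfl
  have hnormmid : ‖Complex.Gamma (-z-3) * Complex.sin ((Real.pi:ℂ) * z / 2)‖ =
      Real.sqrt Real.pi * 2^(-x-4) * (N1/D) := by
    rw [hkey, norm_div, norm_mul, norm_mul]
    rw [Complex.norm_real (Real.sqrt Real.pi), Real.norm_eq_abs,
      _root_.abs_of_nonneg (Real.sqrt_nonneg _)]
    rw [norm2pow, show (-z-4).re = -x-4 from by simp [hxdef], ← hN1, ← hD]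
    ring
  have hnormlast : ‖(12:ℂ) - 6*(2:ℂ)^(-z)‖ ≤ 60 := by
    have h1 : ‖(12:ℂ) - 6*(2:ℂ)^(-z)‖ ≤ ‖(12:ℂ)‖ + ‖6*(2:ℂ)^(-z)‖ := norm_sub_le _ _
    have h2 : ‖(6:ℂ)*(2:ℂ)^(-z)‖ = 6 * 2^(-x) := by
      rw [norm_mul, norm2pow, show (-z).re = -x from by simp [hxdef]]
      norm_num
    have h3 : (2:ℝ)^(-x) ≤ 2^(3:ℝ) := by
      apply Real.rpow_le_rpow_of_exponent_le (by norm_num)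
      linarith
    have h4 : (2:ℝ)^(3:ℝ) = 8 := by
      rw [show (3:ℝ) = ((3:ℕ):ℝ) from by norm_num, Real.rpow_natCast]
      norm_num
    have h5 : ‖(12:ℂ)‖ = 12 := by norm_num
    rw [h5, h2] at h1
    linarith
  have hsmall : Real.sqrt Real.pi * 2^(-x-4) ≤ 1 := by
    have h1 : Real.sqrt Real.pi ≤ 2 := by
      rw [show (2:ℝ) = Real.sqrt 4 from by rw [show (4:ℝ) = 2^2 by norm_num, Real.sqrt_sq (by norm_num)]]
      apply Real.sqrt_le_sqrt
      nlinarith [Real.pi_lt_d2]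
    have h2 : (2:ℝ)^(-x-4) ≤ 2^(-1:ℝ) := by
      apply Real.rpow_le_rpow_of_exponent_le (by norm_num)
      linarith
    rw [Real.rpow_neg_one] at h2
    have h4 : (0:ℝ) ≤ 2^(-x-4) := Real.rpow_nonneg (by norm_num) _
    have h6 : Real.sqrt Real.pi * 2^(-x-4) ≤ 2 * 2^(-x-4) :=
      mul_le_mul_of_nonneg_right h1 h4
    have h8 : (2:ℝ)⁻¹ = 1/2 := by norm_num
    linarith
  -- assemble
  have hNDnn : (0:ℝ) ≤ N1/D := by positivity
  have hpownn : (0:ℝ) ≤ (|y|+1)^e := Real.rpow_nonneg (by linarith [abs_nonneg y]) _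
  have hlamnn : (0:ℝ) ≤ lam^x := Real.rpow_nonneg hlam.le _
  calc ‖Mform lam z‖
      = (2*lam^x/Real.pi) * (Real.sqrt Real.pi * 2^(-x-4) * (N1/D)) *
          ‖(12:ℂ) - 6*(2:ℂ)^(-z)‖ := by
        rw [hMeq, norm_mul, norm_mul, hnormfac1, hnormmid]
    _ ≤ (2*lam^x/Real.pi) * (1 * (N1/D)) * 60 := by
        apply mul_le_mul
        · apply mul_le_mul_of_nonneg_left _ (by positivity)
          exact mul_le_mul_of_nonneg_right hsmall hNDnn
        · exact hnormlast
        · exact norm_nonneg _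
        · positivity
    _ ≤ (1 * lam^x) * (1 * (K * 2^(C+7/2) * (|y|+1)^e)) * 60 := by
        apply mul_le_mul_of_nonneg_right _ (by norm_num)
        apply mul_le_mul
        · rw [div_le_iff₀ Real.pi_pos]
          nlinarith [mul_nonneg hlamnn
            (show (0:ℝ) ≤ Real.pi - 2 by nlinarith [Real.pi_gt_three])]
        · rw [one_mul, one_mul]
          exact hratio
        · rw [one_mul]; exact hNDnn
        · positivity
    _ = (60 * K * 2^(C+7/2)) * lam^x * (|y|+1)^e := by ring
    _ ≤ (60 * K * 2^(C+7/2) + 60 * K * 2^(C+7/2)) * lam^x * (|y|+1)^e := by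
        apply mul_le_mul_of_nonneg_right _ hpownn
        apply mul_le_mul_of_nonneg_right _ hlamnn
        have : (0:ℝ) < 60 * K * 2^(C+7/2) := by positivity
        linarith
    _ = _ := by rw [hedef, hxdef, hydef]
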